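/- If B₁ and B₂ are finite subsets of a vector space V over a field of characteristic 0 or odd characteristic, then |B₁* + B₂*| ≥ (8/3)^{(rk(B₁) + rk(B₂))/2}. -/

import Mathlib

open Finset Pointwise
open scoped Combinatorics.Additive

set_option linter.unusedSectionVars false

/-- The subset-sum set of a finite set `B`: all sums `∑_{a ∈ A} a` over `A ⊆ B`. -/
def subsetSums {V : Type*} [AddCommMonoid V] [DecidableEq V] (B : Finset V) : Finset V :=
  B.powerset.image fun A => A.sum id

namespace SS13


variable {α : Type*} [AddCommGroup α] [DecidableEq α]

def rep (s : Finset α) (x : α) : ℕ := ((s ×ˢ s).filter fun p => p.1 - p.2 = x).card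

lemma rep2_eq (t : Finset α) (x : α) :
    ((t ×ˢ t).filter fun p => p.2 - p.1 = x).card = rep t x := by
  apply Finset.card_nbij' Prod.swap Prod.swap <;> simp [rep, and_comm, Set.MapsTo, Set.LeftInvOn, Set.RightInvOn]

lemma energy_decomp (s t u : Finset α) (hu : ∀ a ∈ s, ∀ b ∈ s, a - b ∈ u) :
    E[s, t] = ∑ x ∈ u, rep s x * ((t ×ˢ t).filter fun p => p.2 - p.1 = x).card := by
  have hdef : E[s, t]
      = (((s ×ˢ s) ×ˢ t ×ˢ t).filter fun x : (α × α) × α × α =>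
          x.1.1 + x.2.1 = x.1.2 + x.2.2).card := rfl
  rw [hdef, Finset.card_eq_sum_card_fiberwise
    (f := fun q : (α × α) × α × α => q.1.1 - q.1.2) (t := u) ?_]
  · refine Finset.sum_congr rfl fun x _ => ?_
    rw [Finset.filter_filter]
    have : (((s ×ˢ s) ×ˢ t ×ˢ t).filter fun q : (α × α) × α × α =>
        (q.1.1 + q.2.1 = q.1.2 + q.2.2) ∧ q.1.1 - q.1.2 = x)
        = ((s ×ˢ s).filter fun p => p.1 - p.2 = x) ×ˢ
          ((t ×ˢ t).filter fun p => p.2 - p.1 = x) := by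
      rw [← Finset.filter_product]
      refine Finset.filter_congr fun q hq => ?_
      constructor
      · rintro ⟨h1, h2⟩
        refine ⟨h2, ?_⟩
        have : q.1.1 - q.1.2 = q.2.2 - q.2.1 := by
          rw [sub_eq_sub_iff_add_eq_add, h1, add_comm]
        rw [← this, h2]
      · rintro ⟨h1, h2⟩
        refine ⟨?_, h1⟩
        have : q.1.1 - q.1.2 = q.2.2 - q.2.1 := by rw [h1, h2]
        rw [sub_eq_sub_iff_add_eq_add] at this
        rw [this, add_comm]
    rw [this, Finset.card_product, rep]
  · rintro ⟨⟨a₁, a₂⟩, b₁, b₂⟩ hq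
    simp only [Finset.mem_coe, Finset.mem_filter, Finset.mem_product] at hq
    exact hu _ hq.1.1.1 _ hq.1.1.2

lemma energy_sq_le (s t : Finset α) : E[s, t] ^ 2 ≤ E[s] * E[t] := by
  classical
  set u := (s - s) ∪ (t - t) with hu
  have hs : ∀ a ∈ s, ∀ b ∈ s, a - b ∈ u := fun a ha b hb =>
    Finset.mem_union_left _ (Finset.sub_mem_sub ha hb)
  have ht : ∀ a ∈ t, ∀ b ∈ t, a - b ∈ u := fun a ha b hb =>
    Finset.mem_union_right _ (Finset.sub_mem_sub ha hb)
  have h1 : E[s, t] = ∑ x ∈ u, rep s x * rep t x := by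
    rw [energy_decomp s t u hs]; simp_rw [rep2_eq]
  have h2 : E[s] = ∑ x ∈ u, rep s x ^ 2 := by
    rw [energy_decomp s s u hs]; simp_rw [rep2_eq, sq]
  have h3 : E[t] = ∑ x ∈ u, rep t x ^ 2 := by
    rw [energy_decomp t t u ht]; simp_rw [rep2_eq, sq]
  rw [h1, h2, h3]
  exact Finset.sum_mul_sq_le_sq_mul_sq u _ _


section Quad
variable {α : Type*} [DecidableEq α]


variable {α : Type*} [DecidableEq α]

def chi {α : Type*} [DecidableEq α] (S : Finset α) (i : α) : ℕ := if i ∈ S then 1 else 0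

def bn (b : Bool) : ℕ := cond b 1 0

def quadSet (t : Finset α) : Finset ((Finset α × Finset α) × Finset α × Finset α) :=
  ((t.powerset ×ˢ t.powerset) ×ˢ t.powerset ×ˢ t.powerset).filter
    fun x => ∀ i ∈ t, chi x.1.1 i + chi x.2.1 i = chi x.1.2 i + chi x.2.2 i

lemma mem_quadSet {t : Finset α} {x : (Finset α × Finset α) × Finset α × Finset α} :
    x ∈ quadSet t ↔ (x.1.1 ⊆ t ∧ x.1.2 ⊆ t ∧ x.2.1 ⊆ t ∧ x.2.2 ⊆ t) ∧
      ∀ i ∈ t, chi x.1.1 i + chi x.2.1 i = chi x.1.2 i + chi x.2.2 i := by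
  simp [quadSet, Finset.mem_filter, Finset.mem_product, and_assoc]

def E6 : Finset ((Bool × Bool) × Bool × Bool) :=
  Finset.univ.filter fun e => bn e.1.1 + bn e.2.1 = bn e.1.2 + bn e.2.2

lemma chi_erase {S : Finset α} {a i : α} (h : i ≠ a) : chi (S.erase a) i = chi S i := by
  simp [chi, Finset.mem_erase, h]

def upd (a : α) (b : Bool) (S : Finset α) : Finset α := cond b (insert a S) S

lemma chi_upd_ne {S : Finset α} {a i : α} (b : Bool) (h : i ≠ a) :
    chi (upd a b S) i = chi S i := by
  cases b <;> simp only [upd, cond] <;> simp [chi, Finset.mem_insert, h]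

lemma chi_upd_self {S : Finset α} {a : α} (b : Bool) (h : a ∉ S) :
    chi (upd a b S) a = bn b := by
  cases b <;> simp [upd, chi, bn, h]

lemma chi_self_eq_bn {S : Finset α} {a : α} : chi S a = bn (decide (a ∈ S)) := by
  by_cases h : a ∈ S <;> simp [chi, bn, h]

lemma quadSet_card (t : Finset α) : (quadSet t).card = 6 ^ t.card := by
  induction t using Finset.induction_on with
  | empty => simp [quadSet]
  | @insert a s ha ih =>
    rw [Finset.card_insert_of_notMem ha, pow_succ, mul_comm (6 ^ s.card) 6]
    have hE6 : E6.card = 6 := by decide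
    rw [← ih, ← hE6, ← Finset.card_product]
    apply Finset.card_nbij'
      (i := fun x => (((decide (a ∈ x.1.1), decide (a ∈ x.1.2)),
            (decide (a ∈ x.2.1), decide (a ∈ x.2.2))),
          ((x.1.1.erase a, x.1.2.erase a), (x.2.1.erase a, x.2.2.erase a))))
      (j := fun y => ((upd a y.1.1.1 y.2.1.1, upd a y.1.1.2 y.2.1.2),
          (upd a y.1.2.1 y.2.2.1, upd a y.1.2.2 y.2.2.2)))
    · -- hi
      rintro ⟨⟨S₁, S₂⟩, T₁, T₂⟩ hx
      rw [Finset.mem_coe, mem_quadSet] at hx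
      obtain ⟨⟨h1, h2, h3, h4⟩, hc⟩ := hx
      rw [Finset.mem_coe, Finset.mem_product]
      constructor
      · simp only [E6, Finset.mem_filter, Finset.mem_univ, true_and]
        have := hc a (Finset.mem_insert_self a s)
        simpa only [chi_self_eq_bn] using this
      · rw [mem_quadSet]
        refine ⟨⟨?_, ?_, ?_, ?_⟩, ?_⟩
        · exact (Finset.subset_insert_iff).1 h1
        · exact (Finset.subset_insert_iff).1 h2
        · exact (Finset.subset_insert_iff).1 h3
        · exact (Finset.subset_insert_iff).1 h4
        · intro i hi
          have hne : i ≠ a := fun h => ha (h ▸ hi)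
          simp only [chi_erase hne]
          exact hc i (Finset.mem_insert_of_mem hi)
    · -- hj
      rintro ⟨⟨⟨e₁, e₂⟩, e₃, e₄⟩, ⟨S₁, S₂⟩, T₁, T₂⟩ hy
      rw [Finset.mem_coe, Finset.mem_product] at hy
      obtain ⟨he, hq⟩ := hy
      rw [mem_quadSet] at hq
      obtain ⟨⟨h1, h2, h3, h4⟩, hc⟩ := hq
      simp only [E6, Finset.mem_filter, Finset.mem_univ, true_and] at he
      rw [Finset.mem_coe, mem_quadSet]
      have sub : ∀ (b : Bool) (S : Finset α), S ⊆ s → upd a b S ⊆ insert a s := by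
        intro b S hS
        cases b
        · exact hS.trans (Finset.subset_insert a s)
        · exact Finset.insert_subset_insert a hS
      refine ⟨⟨sub _ _ h1, sub _ _ h2, sub _ _ h3, sub _ _ h4⟩, ?_⟩
      intro i hi
      rcases Finset.mem_insert.1 hi with rfl | hi
      · rw [chi_upd_self _ (fun h => ha (h1 h)), chi_upd_self _ (fun h => ha (h2 h)),
          chi_upd_self _ (fun h => ha (h3 h)), chi_upd_self _ (fun h => ha (h4 h))]
        exact he
      · have hne : i ≠ a := fun h => ha (h ▸ hi)
        rw [chi_upd_ne _ hne, chi_upd_ne _ hne, chi_upd_ne _ hne, chi_upd_ne _ hne]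
        exact hc i hi
    · -- left_inv
      rintro ⟨⟨S₁, S₂⟩, T₁, T₂⟩ hx
      have key : ∀ S : Finset α, upd a (decide (a ∈ S)) (S.erase a) = S := by
        intro S
        by_cases h : a ∈ S
        · simp [upd, h, Finset.insert_erase h]
        · simp [upd, h, Finset.erase_eq_of_notMem h]
      simp only [key]
    · -- right_inv
      rintro ⟨⟨⟨e₁, e₂⟩, e₃, e₄⟩, ⟨S₁, S₂⟩, T₁, T₂⟩ hy
      rw [Finset.mem_coe, Finset.mem_product] at hy
      obtain ⟨-, hq⟩ := hy
      rw [mem_quadSet] at hq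
      obtain ⟨⟨h1, h2, h3, h4⟩, -⟩ := hq
      have key : ∀ (b : Bool) (S : Finset α), S ⊆ s →
          (decide (a ∈ upd a b S) = b ∧ (upd a b S).erase a = S) := by
        intro b S hS
        have haS : a ∉ S := fun h => ha (hS h)
        cases b
        · exact ⟨by simp [upd, haS], by simp [upd, Finset.erase_eq_of_notMem haS]⟩
        · exact ⟨by simp [upd], by simp [upd, Finset.erase_insert haS]⟩
      simp only [(key _ _ h1).1, (key _ _ h1).2, (key _ _ h2).1, (key _ _ h2).2,
        (key _ _ h3).1, (key _ _ h3).2, (key _ _ h4).1, (key _ _ h4).2]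


end Quad

section Cube




variable {F V : Type*} [Field F] [AddCommGroup V] [Module F V] [DecidableEq V]

lemma cast_inj_le_two (h2 : (2 : F) ≠ 0) {m n : ℕ} (hm : m ≤ 2) (hn : n ≤ 2)
    (h : (m : F) = n) : m = n := by
  interval_cases m <;> interval_cases n <;>
    first
      | rfl
      | (exfalso; revert h; push_cast; intro h)
  · exact one_ne_zero h.symm
  · exact h2 h.symm
  · exact one_ne_zero h
  · exact one_ne_zero (by rw [← one_add_one_eq_two] at h; exact right_eq_add.mp h)
  · exact h2 h
  · exact one_ne_zero (by rw [← one_add_one_eq_two] at h; exact right_eq_add.mp h.symm)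

variable {T : Finset V} (hind : ∀ g : V → F, ∑ i ∈ T, g i • i = 0 → ∀ i ∈ T, g i = 0)

lemma sum_eq_chi {S : Finset V} (hS : S ⊆ T) :
    S.sum id = ∑ i ∈ T, (chi S i : F) • i := by
  have : ∀ i ∈ T, (chi S i : F) • i = if i ∈ S then i else 0 := by
    intro i _
    by_cases h : i ∈ S <;> simp [chi, h]
  rw [Finset.sum_congr rfl this, Finset.sum_ite_mem,
    Finset.inter_eq_right.mpr hS]
  rfl

include hind in
lemma faithful {c d : V → ℕ} (hc : ∀ i, c i ≤ 2) (hd : ∀ i, d i ≤ 2) (h2 : (2 : F) ≠ 0)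
    (h : ∑ i ∈ T, (c i : F) • i = ∑ i ∈ T, (d i : F) • i) : ∀ i ∈ T, c i = d i := by
  intro i hi
  have hz : ∑ i ∈ T, ((c i : F) - (d i : F)) • i = 0 := by
    simp_rw [sub_smul, Finset.sum_sub_distrib, h, sub_self]
  have := hind _ hz i hi
  exact cast_inj_le_two h2 (hc i) (hd i) (sub_eq_zero.mp this)


include hind in
lemma quad_iff (h2 : (2 : F) ≠ 0) {S₁ S₂ T₁ T₂ : Finset V}
    (h1 : S₁ ⊆ T) (h2' : S₂ ⊆ T) (h3 : T₁ ⊆ T) (h4 : T₂ ⊆ T) :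
    S₁.sum id + T₁.sum id = S₂.sum id + T₂.sum id ↔
      ∀ i ∈ T, chi S₁ i + chi T₁ i = chi S₂ i + chi T₂ i := by
  rw [sum_eq_chi (F := F) h1, sum_eq_chi (F := F) h2', sum_eq_chi (F := F) h3, sum_eq_chi (F := F) h4,
    ← Finset.sum_add_distrib, ← Finset.sum_add_distrib]
  constructor
  · intro h
    have := faithful hind (c := fun i => chi S₁ i + chi T₁ i)
      (d := fun i => chi S₂ i + chi T₂ i)
      (fun i => by simp only [chi]; split <;> split <;> omega)
      (fun i => by simp only [chi]; split <;> split <;> omega) h2 ?_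
    · exact this
    · push_cast
      simpa [add_smul] using h
  · intro h
    refine Finset.sum_congr rfl fun i hi => ?_
    rw [← add_smul, ← add_smul, ← Nat.cast_add, ← Nat.cast_add, h i hi]

include hind in
lemma phi_injOn (h2 : (2 : F) ≠ 0) {S₁ S₂ : Finset V} (h1 : S₁ ⊆ T) (h2' : S₂ ⊆ T)
    (h : S₁.sum id = S₂.sum id) : S₁ = S₂ := by
  have := (quad_iff hind h2 h1 h2' (Finset.empty_subset T) (Finset.empty_subset T)).mp
    (by simpa using h)
  ext a
  by_cases ha : a ∈ T
  · have := this a ha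
    simp only [chi, Finset.notMem_empty, if_false, add_zero] at this
    by_cases h1' : a ∈ S₁ <;> by_cases h2'' : a ∈ S₂ <;> simp_all
  · constructor
    · intro h'; exact absurd (h1 h') ha
    · intro h'; exact absurd (h2' h') ha


include hind in
lemma card_cube (h2 : (2 : F) ≠ 0) : (subsetSums T).card = 2 ^ T.card := by
  rw [subsetSums, Finset.card_image_of_injOn, Finset.card_powerset]
  intro S₁ hS₁ S₂ hS₂ h
  exact phi_injOn hind h2 (Finset.mem_powerset.1 hS₁) (Finset.mem_powerset.1 hS₂) h

include hind in
lemma energy_cube (h2 : (2 : F) ≠ 0) : E[subsetSums T] = 6 ^ T.card := by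
  rw [← quadSet_card T]
  set C := subsetSums T with hC
  have hdef : E[C, C]
      = (((C ×ˢ C) ×ˢ C ×ˢ C).filter fun x : (V × V) × V × V =>
          x.1.1 + x.2.1 = x.1.2 + x.2.2).card := rfl
  rw [hdef]
  symm
  have hmem : ∀ S : Finset V, S ⊆ T → S.sum id ∈ C := by
    intro S hS
    exact Finset.mem_image.2 ⟨S, Finset.mem_powerset.2 hS, rfl⟩
  apply Finset.card_bij
    (i := fun x _ => ((x.1.1.sum id, x.1.2.sum id), (x.2.1.sum id, x.2.2.sum id)))
  · rintro ⟨⟨S₁, S₂⟩, T₁, T₂⟩ hx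
    rw [mem_quadSet] at hx
    obtain ⟨⟨hs1, hs2, hs3, hs4⟩, hc⟩ := hx
    rw [Finset.mem_filter]
    constructor
    · simp only [Finset.mem_product]
      exact ⟨⟨hmem _ hs1, hmem _ hs2⟩, hmem _ hs3, hmem _ hs4⟩
    · exact (quad_iff hind h2 hs1 hs2 hs3 hs4).mpr hc
  · rintro ⟨⟨S₁, S₂⟩, T₁, T₂⟩ hx ⟨⟨S₁', S₂'⟩, T₁', T₂'⟩ hx' heq
    rw [mem_quadSet] at hx hx'
    obtain ⟨⟨hs1, hs2, hs3, hs4⟩, -⟩ := hx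
    obtain ⟨⟨hs1', hs2', hs3', hs4'⟩, -⟩ := hx'
    simp only [Prod.mk.injEq] at heq
    obtain ⟨⟨e1, e2⟩, e3, e4⟩ := heq
    simp only [Prod.mk.injEq]
    exact ⟨⟨phi_injOn hind h2 hs1 hs1' e1, phi_injOn hind h2 hs2 hs2' e2⟩,
      phi_injOn hind h2 hs3 hs3' e3, phi_injOn hind h2 hs4 hs4' e4⟩
  · rintro ⟨⟨v₁, v₂⟩, v₃, v₄⟩ hb
    rw [Finset.mem_filter] at hb
    obtain ⟨hmemb, hcond⟩ := hb
    simp only [Finset.mem_product] at hmemb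
    obtain ⟨⟨h1, h2'⟩, h3, h4⟩ := hmemb
    obtain ⟨S₁, hS₁, rfl⟩ := Finset.mem_image.1 h1
    obtain ⟨S₂, hS₂, rfl⟩ := Finset.mem_image.1 h2'
    obtain ⟨T₁, hT₁, rfl⟩ := Finset.mem_image.1 h3
    obtain ⟨T₂, hT₂, rfl⟩ := Finset.mem_image.1 h4
    rw [Finset.mem_powerset] at hS₁ hS₂ hT₁ hT₂
    refine ⟨((S₁, S₂), T₁, T₂), ?_, rfl⟩
    rw [mem_quadSet]
    exact ⟨⟨hS₁, hS₂, hT₁, hT₂⟩,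
      (quad_iff hind h2 hS₁ hS₂ hT₁ hT₂).mp hcond⟩

lemma exists_good (B : Finset V) : ∃ T : Finset V, T ⊆ B ∧
    Module.finrank F (Submodule.span F (B : Set V)) = T.card ∧
    ∀ g : V → F, ∑ i ∈ T, g i • i = 0 → ∀ i ∈ T, g i = 0 := by
  classical
  obtain ⟨t, hsub, hspan, hli⟩ := exists_linearIndependent F ((B : Set V))
  have hfin : t.Finite := B.finite_toSet.subset hsub
  have hcoe : (hfin.toFinset : Set V) = t := hfin.coe_toFinset
  have hliT : LinearIndependent F ((↑) : ↥(hfin.toFinset) → V) := by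
    rw [← hcoe] at hli
    exact hli
  refine ⟨hfin.toFinset, ?_, ?_, ?_⟩
  · intro x hx
    exact hsub ((Set.Finite.mem_toFinset hfin).mp hx)
  · rw [← hspan]
    have h := finrank_span_finset_eq_card hliT
    rw [hcoe] at h
    exact h
  · intro g hg i hi
    have h0 : ∑ j : ↥(hfin.toFinset), g ↑j • (↑j : V) = 0 := by
      rw [Finset.sum_coe_sort hfin.toFinset (fun i => g i • i)]
      exact hg
    exact Fintype.linearIndependent_iff.mp hliT (fun j => g ↑j) h0 ⟨i, hi⟩

end Cube

lemma subsetSums_mono {V : Type*} [AddCommMonoid V] [DecidableEq V] {B B' : Finset V}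
    (h : B ⊆ B') : subsetSums B ⊆ subsetSums B' :=
  Finset.image_subset_image (Finset.powerset_mono.mpr h)

end SS13

theorem stmt13 {F V : Type*} [Field F] (hF : ringChar F ≠ 2)
    [AddCommGroup V] [Module F V] [DecidableEq V]
    (B₁ B₂ : Finset V) :
    ((8 : ℝ) / 3) ^ (((Module.finrank F (Submodule.span F ((B₁ : Set V)))
          + Module.finrank F (Submodule.span F ((B₂ : Set V))) : ℕ) : ℝ) / 2)
      ≤ ((subsetSums B₁ + subsetSums B₂).card : ℝ) := by
  classical
  have h2 : (2 : F) ≠ 0 := Ring.two_ne_zero hF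
  obtain ⟨T₁, hT₁B, hr₁, hind₁⟩ := SS13.exists_good (F := F) B₁
  obtain ⟨T₂, hT₂B, hr₂, hind₂⟩ := SS13.exists_good (F := F) B₂
  rw [hr₁, hr₂]
  set r₁ := T₁.card
  set r₂ := T₂.card
  set C₁ := subsetSums T₁ with hC₁
  set C₂ := subsetSums T₂ with hC₂
  set K := (subsetSums B₁ + subsetSums B₂).card with hKdef
  have hc₁ : C₁.card = 2 ^ r₁ := SS13.card_cube hind₁ h2
  have hc₂ : C₂.card = 2 ^ r₂ := SS13.card_cube hind₂ h2
  have he₁ : E[C₁] = 6 ^ r₁ := SS13.energy_cube hind₁ h2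
  have he₂ : E[C₂] = 6 ^ r₂ := SS13.energy_cube hind₂ h2
  have hCS : E[C₁, C₂] ^ 2 ≤ 6 ^ (r₁ + r₂) := by
    calc E[C₁, C₂] ^ 2 ≤ E[C₁] * E[C₂] := SS13.energy_sq_le C₁ C₂
      _ = 6 ^ (r₁ + r₂) := by rw [he₁, he₂, pow_add]
  have hsub : (C₁ + C₂).card ≤ K := by
    apply Finset.card_le_card
    exact Finset.add_subset_add (SS13.subsetSums_mono hT₁B) (SS13.subsetSums_mono hT₂B)
  have hK : C₁.card ^ 2 * C₂.card ^ 2 ≤ K * E[C₁, C₂] :=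
    (Finset.le_card_add_mul_addEnergy C₁ C₂).trans (Nat.mul_le_mul hsub le_rfl)
  have hcc : (C₁.card ^ 2 * C₂.card ^ 2) ^ 2 = 16 ^ (r₁ + r₂) := by
    have e1 : (16 : ℕ) ^ (r₁ + r₂) = ((2 : ℕ) ^ (r₁ + r₂)) ^ 4 := by
      rw [show (16 : ℕ) = 2 ^ 4 from rfl, ← pow_mul, ← pow_mul, Nat.mul_comm]
    have e2 : (C₁.card ^ 2 * C₂.card ^ 2) ^ 2 = ((2 : ℕ) ^ (r₁ + r₂)) ^ 4 := by
      rw [hc₁, hc₂, ← mul_pow, ← pow_add, ← pow_mul]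
    exact e2.trans e1.symm
  have hnat : 16 ^ (r₁ + r₂) ≤ K ^ 2 * 6 ^ (r₁ + r₂) := by
    calc 16 ^ (r₁ + r₂) = (C₁.card ^ 2 * C₂.card ^ 2) ^ 2 := hcc.symm
      _ ≤ (K * E[C₁, C₂]) ^ 2 := Nat.pow_le_pow_left hK 2
      _ = K ^ 2 * E[C₁, C₂] ^ 2 := by ring
      _ ≤ K ^ 2 * 6 ^ (r₁ + r₂) := Nat.mul_le_mul le_rfl hCS
  have hreal : ((8 : ℝ) / 3) ^ (r₁ + r₂ : ℕ) ≤ (K : ℝ) ^ 2 := by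
    have h6 : (0 : ℝ) < (6 : ℝ) ^ (r₁ + r₂) := by positivity
    rw [show (8 : ℝ) / 3 = 16 / 6 by norm_num, div_pow, div_le_iff₀ h6]
    exact_mod_cast hnat
  calc ((8 : ℝ) / 3) ^ (((r₁ + r₂ : ℕ) : ℝ) / 2)
      = (((8 : ℝ) / 3) ^ (((r₁ + r₂ : ℕ)) : ℝ)) ^ ((2 : ℝ)⁻¹) := by
        rw [show (((r₁ + r₂ : ℕ) : ℝ)) / 2 = ((r₁ + r₂ : ℕ) : ℝ) * (2 : ℝ)⁻¹ from
          div_eq_mul_inv _ _, Real.rpow_mul (by norm_num : (0:ℝ) ≤ 8 / 3)]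
    _ = (((8 : ℝ) / 3) ^ (r₁ + r₂ : ℕ)) ^ ((2 : ℝ)⁻¹) := by rw [Real.rpow_natCast]
    _ ≤ ((K : ℝ) ^ 2) ^ ((2 : ℝ)⁻¹) := by
        apply Real.rpow_le_rpow (by positivity) hreal (by norm_num)
    _ = (K : ℝ) := by
        rw [← Real.rpow_natCast (K : ℝ) 2, ← Real.rpow_mul (Nat.cast_nonneg K)]
        norm_num
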